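/- Let W = (w_N) be a weight function system satisfying (ε)₀ (for all N and all μ > 0, ∫₀^∞ w_N(t) e^{-μt} dt < ∞). Then for every N ∈ ℕ and every h > 0 there exists a holomorphic function Q on the horizontal strip T_h = {z ∈ ℂ : |Im z| < h} such that |Q(ξ)| ≥ exp(w_N(|Re ξ|)) for all ξ ∈ T_h. -/

import Mathlib

lemma cosh_re_aux (z : ℂ) : (Complex.cosh z).re = Real.cosh z.re * Real.cos z.im := by
  show ((Complex.exp z + Complex.exp (-z)) / 2).re = _
  simp [Complex.div_re, Complex.add_re, Complex.exp_re, Complex.normSq, Real.cosh_eq,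
    Complex.exp_im]
  ring

theorem stmt_9 (w : ℕ → ℝ → ℝ)
    (hmono : ∀ N, MonotoneOn (w N) (Set.Ici 0))
    (hpos : ∀ N, ∀ t ≥ (0:ℝ), 0 ≤ w N t)
    (hunb : ∀ N, ∀ C : ℝ, ∃ t ≥ (0:ℝ), C ≤ w N t)
    (hsys : ∀ N, ∀ t ≥ (0:ℝ), w N t ≤ w (N+1) t)
    (heps : ∀ N, ∀ μ > (0:ℝ), MeasureTheory.IntegrableOn
      (fun t => w N t * Real.exp (-μ * t)) (Set.Ioi (0:ℝ))) :
    ∀ N : ℕ, ∀ h > (0:ℝ), ∃ Q : ℂ → ℂ,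
      DifferentiableOn ℂ Q {z : ℂ | |z.im| < h} ∧
      ∀ ξ : ℂ, |ξ.im| < h → Real.exp (w N |ξ.re|) ≤ ‖Q ξ‖ := by
  intro N h hh
  set a : ℝ := Real.pi / (4 * h) with ha_def
  have ha : 0 < a := div_pos Real.pi_pos (by linarith)
  have hah : a * h = Real.pi / 4 := by
    field_simp [ha_def]
    rw [ha_def, div_mul_eq_mul_div, div_mul_eq_mul_div, div_eq_iff (by positivity)]; ring
  have hcosah : Real.cos (a * h) = Real.sqrt 2 / 2 := by
    rw [hah, Real.cos_pi_div_four]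
  have hcosah_pos : 0 < Real.cos (a * h) := by
    rw [hcosah]; positivity
  have hI := heps N a ha
  set I : ℝ := ∫ t in Set.Ioi (0:ℝ), w N t * Real.exp (-a * t) with hI_def
  have hInonneg : 0 ≤ I := by
    apply MeasureTheory.setIntegral_nonneg measurableSet_Ioi
    intro t ht
    exact mul_nonneg (hpos N t (le_of_lt ht)) (Real.exp_nonneg _)
  set C : ℝ := I * Real.exp a with hC_def
  have hCnonneg : 0 ≤ C := mul_nonneg hInonneg (Real.exp_nonneg _)
  -- the key growth bound: w N t ≤ C * exp (a * t) for t ≥ 0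
  have hbound : ∀ t : ℝ, 0 ≤ t → w N t ≤ C * Real.exp (a * t) := by
    intro t ht
    have hsub : Set.Ioc t (t + 1) ⊆ Set.Ioi (0:ℝ) := by
      intro s hs
      exact lt_of_le_of_lt ht hs.1
    have hint : MeasureTheory.IntegrableOn (fun s => w N s * Real.exp (-a * s))
        (Set.Ioc t (t + 1)) := hI.mono_set hsub
    have step1 : w N t * Real.exp (-a * (t + 1)) ≤
        ∫ s in Set.Ioc t (t + 1), w N s * Real.exp (-a * s) := by
      have hconst : ∫ s in Set.Ioc t (t + 1), w N t * Real.exp (-a * (t + 1))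
          = w N t * Real.exp (-a * (t + 1)) := by
        rw [MeasureTheory.setIntegral_const]
        simp [Real.volume_Ioc]
      rw [← hconst]
      apply MeasureTheory.setIntegral_mono_on
        (MeasureTheory.integrableOn_const (by simp [Real.volume_Ioc]))
        hint measurableSet_Ioc
      intro s hs
      have hws : w N t ≤ w N s := hmono N ht (le_trans ht hs.1.le) hs.1.le
      have hexs : Real.exp (-a * (t + 1)) ≤ Real.exp (-a * s) := by
        apply Real.exp_le_exp.2
        nlinarith [hs.2, ha]
      exact mul_le_mul hws hexs (Real.exp_nonneg _) (le_trans (hpos N t ht) hws)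
    have step2 : (∫ s in Set.Ioc t (t + 1), w N s * Real.exp (-a * s)) ≤ I := by
      apply MeasureTheory.setIntegral_mono_set hI
      · filter_upwards [MeasureTheory.ae_restrict_mem measurableSet_Ioi] with s hs
        exact mul_nonneg (hpos N s (le_of_lt hs)) (Real.exp_nonneg _)
      · exact Filter.Eventually.of_forall hsub
    have h3 : w N t * Real.exp (-a * (t + 1)) ≤ I := le_trans step1 step2
    have hexp : Real.exp (-a * (t + 1)) = (Real.exp (a * (t + 1)))⁻¹ := by
      rw [← Real.exp_neg]; ring_nf
    have h4 : w N t ≤ I * Real.exp (a * (t + 1)) := by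
      rw [hexp] at h3
      exact (div_le_iff₀ (Real.exp_pos _)).mp (by rwa [div_eq_mul_inv])
    calc w N t ≤ I * Real.exp (a * (t + 1)) := h4
      _ = C * Real.exp (a * t) := by
          rw [hC_def, mul_add, mul_one, Real.exp_add]; ring
  set K : ℝ := max 1 (2 * C / Real.cos (a * h)) with hK_def
  have hK1 : (1:ℝ) ≤ K := le_max_left _ _
  have hKC : 2 * C ≤ K * Real.cos (a * h) := by
    have : 2 * C / Real.cos (a * h) ≤ K := le_max_right _ _
    calc 2 * C = (2 * C / Real.cos (a * h)) * Real.cos (a * h) := by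
          field_simp
      _ ≤ K * Real.cos (a * h) := by
          exact mul_le_mul_of_nonneg_right this hcosah_pos.le
  refine ⟨fun z => Complex.exp ((K : ℂ) * Complex.cosh ((a : ℂ) * z)), ?_, ?_⟩
  · apply Differentiable.differentiableOn
    apply Complex.differentiable_exp.comp
    exact (differentiable_const _).mul
      (Complex.differentiable_cosh.comp ((differentiable_const _).mul differentiable_id))
  · intro ξ hξ
    have hre : ((K : ℂ) * Complex.cosh ((a : ℂ) * ξ)).re
        = K * (Real.cosh (a * ξ.re) * Real.cos (a * ξ.im)) := by
      rw [Complex.re_ofReal_mul, cosh_re_aux]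
      congr 2 <;> simp [Complex.re_ofReal_mul]
    rw [show ‖Complex.exp ((K : ℂ) * Complex.cosh ((a : ℂ) * ξ))‖
        = ‖(Complex.exp ((K : ℂ) * Complex.cosh ((a : ℂ) * ξ)))‖ from rfl,
      Complex.norm_exp, hre]
    apply Real.exp_le_exp.2
    -- inequalities
    have hcos : Real.cos (a * h) ≤ Real.cos (a * ξ.im) := by
      rw [← Real.cos_abs (a * ξ.im)]
      apply Real.cos_le_cos_of_nonneg_of_le_pi (abs_nonneg _)
      · rw [hah]; linarith [Real.pi_pos]
      · rw [abs_mul, abs_of_pos ha]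
        exact mul_le_mul_of_nonneg_left hξ.le ha.le
    have hcosh : Real.exp (a * |ξ.re|) / 2 ≤ Real.cosh (a * ξ.re) := by
      rw [← Real.cosh_abs, abs_mul, abs_of_pos ha, Real.cosh_eq]
      have := Real.exp_nonneg (-(a * |ξ.re|))
      linarith
    have hw : w N |ξ.re| ≤ C * Real.exp (a * |ξ.re|) := hbound _ (abs_nonneg _)
    have hcoshpos : 0 < Real.cosh (a * ξ.re) := Real.cosh_pos _
    have hKpos : (0:ℝ) < K := lt_of_lt_of_le one_pos hK1
    have hexppos : (0:ℝ) < Real.exp (a * |ξ.re|) := Real.exp_pos _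
    nlinarith [mul_le_mul_of_nonneg_left hcos (mul_nonneg hKpos.le hcoshpos.le),
      mul_le_mul_of_nonneg_right hKC (Real.exp_nonneg (a * |ξ.re|)),
      mul_le_mul_of_nonneg_left hcosh (mul_nonneg hKpos.le hcosah_pos.le)]
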